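/- The flat principal S¹-bundle over the Eilenberg–MacLane space K(ℚ/ℤ,1) with holonomy the inclusion homomorphism ℚ/ℤ ↪ S¹ is not virtually trivial: its classifying map K(ℚ/ℤ,1) → BS¹ = K(ℤ,2) corresponds to an element of infinite order in H^2(K(ℚ/ℤ,1), ℤ) ≅ lim_n ℤ/nℤ. -/

import Mathlib

noncomputable section
set_option linter.unusedVariables false
open scoped Manifold Topology

/-! ### Principal bundles -/

/-- A principal `G`-bundle structure on a map `p : E → X`: a continuous free fiber-preserving
`G`-action on `E` which is locally trivial over `X`. -/
structure IsPrincipalBundle (G : Type) [Group G] [TopologicalSpace G]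
    {E X : Type} [TopologicalSpace E] [TopologicalSpace X] [MulAction G E]
    (p : E → X) : Prop where
  continuous_proj : Continuous p
  surjective_proj : Function.Surjective p
  continuous_smul : Continuous fun q : G × E => q.1 • q.2
  proj_smul : ∀ (g : G) (e : E), p (g • e) = p e
  locally_trivial : ∀ x : X, ∃ U : Set X, IsOpen U ∧ x ∈ U ∧
    ∃ φ : ↥U × G ≃ₜ ↥(p ⁻¹' U),
      (∀ (u : ↥U) (g : G), p (φ (u, g) : E) = (u : X)) ∧
      (∀ (u : ↥U) (g h : G), (φ (u, h * g) : E) = h • (φ (u, g) : E))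

/-- A principal `G`-bundle is trivial if it is isomorphic, as a `G`-bundle, to the
product bundle `X × G → X`. -/
def IsTrivialBundle (G : Type) [Group G] [TopologicalSpace G]
    {E X : Type} [TopologicalSpace E] [TopologicalSpace X] [MulAction G E]
    (p : E → X) : Prop :=
  ∃ φ : X × G ≃ₜ E, (∀ (x : X) (g : G), p (φ (x, g)) = x) ∧
    ∀ (x : X) (g h : G), φ (x, h * g) = h • φ (x, g)

/-- A finite covering map: a covering map with finite fibres. -/
def IsFiniteCovering {Y X : Type} [TopologicalSpace Y] [TopologicalSpace X] (f : Y → X) : Prop :=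
  IsCoveringMap f ∧ ∀ x : X, Finite (f ⁻¹' {x})

/-- A principal `G`-bundle `p : E → X` is virtually trivial if its pull-back to some finite
covering space of `X` is trivial. -/
def IsVirtuallyTrivial (G : Type) [Group G] [TopologicalSpace G]
    {E X : Type} [TopologicalSpace E] [TopologicalSpace X] [MulAction G E]
    (p : E → X) : Prop :=
  ∃ (Y : Type) (tY : TopologicalSpace Y) (f : Y → X),
    ConnectedSpace Y ∧ IsFiniteCovering f ∧
    ∃ φ : Y × G ≃ₜ {q : Y × E // f q.1 = p q.2},
      (∀ (y : Y) (g : G), ((φ (y, g) : Y × E)).1 = y) ∧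
      ∀ (y : Y) (g h : G), ((φ (y, h * g) : Y × E)).2 = h • ((φ (y, g) : Y × E)).2

/-! ### Flat bundles -/

/-- The total space `X̃ ×ρ G` of the flat bundle associated to a representation
`ρ : Γ → G` of the deck group `Γ` of a covering `X̃ → X`. -/
def FlatTotalSpace (Xt : Type) {G Γ : Type} [TopologicalSpace Xt] [TopologicalSpace G]
    [Group G] [Group Γ] [MulAction Γ Xt] (ρ : Γ →* G) : Type :=
  Quot (fun q q' : Xt × G => ∃ γ : Γ, q' = (γ • q.1, q.2 * (ρ γ)⁻¹))

instance {Xt G Γ : Type} [TopologicalSpace Xt] [TopologicalSpace G]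
    [Group G] [Group Γ] [MulAction Γ Xt] (ρ : Γ →* G) :
    TopologicalSpace (FlatTotalSpace Xt ρ) :=
  instTopologicalSpaceQuot

/-- The projection `X̃ ×ρ G → X`. -/
def FlatTotalSpace.proj {Xt X G Γ : Type} [TopologicalSpace Xt] [TopologicalSpace X]
    [TopologicalSpace G] [Group G] [Group Γ] [MulAction Γ Xt] (ρ : Γ →* G)
    (u : Xt → X) (hu : ∀ (γ : Γ) (x : Xt), u (γ • x) = u x) :
    FlatTotalSpace Xt ρ → X :=
  Quot.lift (fun q => u q.1) (by rintro ⟨x, g⟩ ⟨y, h⟩ ⟨γ, hγ⟩; cases hγ; exact (hu γ x).symm)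

/-- The left `G`-action on `X̃ ×ρ G`. -/
def FlatTotalSpace.smul {Xt G Γ : Type} [TopologicalSpace Xt] [TopologicalSpace G]
    [Group G] [Group Γ] [MulAction Γ Xt] (ρ : Γ →* G) (h : G) :
    FlatTotalSpace Xt ρ → FlatTotalSpace Xt ρ :=
  Quot.map (fun q => (q.1, h * q.2))
    (by rintro ⟨x, g⟩ ⟨y, g'⟩ ⟨γ, hγ⟩; cases hγ; exact ⟨γ, by simp [mul_assoc]⟩)

/-- A principal `G`-bundle `p : E → X` is flat if it is equivalent to the bundle
`X̃ ×ρ G → X` canonically associated with the universal cover `X̃` of `X` and a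
holonomy homomorphism `ρ : π₁(X) → G`.  Here the universal cover is presented as a
covering `u : X̃ → X` with `X̃` connected and simply connected, together with the free
fibrewise-transitive action of the fundamental group `Γ` by deck transformations. -/
def IsFlatBundle (G : Type) [Group G] [TopologicalSpace G]
    {E X : Type} [TopologicalSpace E] [TopologicalSpace X] [MulAction G E]
    (p : E → X) : Prop :=
  IsPrincipalBundle G p ∧
  ∃ (Xt : Type) (tXt : TopologicalSpace Xt) (u : Xt → X)
    (Γ : Type) (gΓ : Group Γ) (aΓ : MulAction Γ Xt) (ρ : Γ →* G),
    IsCoveringMap u ∧ ConnectedSpace Xt ∧ SimplyConnectedSpace Xt ∧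
    (∀ γ : Γ, Continuous fun x : Xt => γ • x) ∧
    (∀ (γ : Γ) (x : Xt), γ • x = x → γ = 1) ∧
    ∃ hu : ∀ (γ : Γ) (x : Xt), u (γ • x) = u x,
    (∀ x y : Xt, u x = u y → ∃ γ : Γ, γ • x = y) ∧
    ∃ Φ : E ≃ₜ FlatTotalSpace Xt ρ,
      (∀ e : E, FlatTotalSpace.proj ρ u hu (Φ e) = p e) ∧
      ∀ (h : G) (e : E), Φ (h • e) = FlatTotalSpace.smul ρ h (Φ e)
/-! ### CW complexes -/

/-- The closed `n`-disk. -/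
def CWDisk (n : ℕ) : Set (EuclideanSpace ℝ (Fin n)) := Metric.closedBall 0 1

/-- The open `n`-cell inside the closed `n`-disk. -/
def CWInterior (n : ℕ) : Set ↥(CWDisk n) := {y | ‖(y : EuclideanSpace ℝ (Fin n))‖ < 1}

/-- The boundary sphere of the closed `n`-disk. -/
def CWBoundary (n : ℕ) : Set ↥(CWDisk n) := {y | ‖(y : EuclideanSpace ℝ (Fin n))‖ = 1}

/-- A CW structure on a space `X`: a Hausdorff space together with characteristic maps
from closed disks whose open cells partition `X`, such that the boundary of each cell is
contained in cells of strictly smaller dimension, each closed cell meets only finitely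
many open cells (closure finiteness), and `X` carries the weak topology determined by
the characteristic maps. -/
structure CWStructure (X : Type) [TopologicalSpace X] : Type 1 where
  cell : Type
  dim : cell → ℕ
  char : ∀ i : cell, C(↥(CWDisk (dim i)), X)
  t2 : T2Space X
  injOn : ∀ i : cell, Set.InjOn (char i) (CWInterior (dim i))
  cover : ∀ x : X, ∃ (i : cell) (y : ↥(CWDisk (dim i))), y ∈ CWInterior (dim i) ∧ char i y = x
  disjoint' : Pairwise fun i j =>
    Disjoint (char i '' CWInterior (dim i)) (char j '' CWInterior (dim j))
  boundary : ∀ i : cell, char i '' CWBoundary (dim i) ⊆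
    ⋃ j ∈ {j : cell | dim j < dim i}, char j '' CWInterior (dim j)
  closureFinite : ∀ i : cell,
    {j : cell | (Set.range (char i) ∩ char j '' CWInterior (dim j)).Nonempty}.Finite
  weak : ∀ s : Set X, (∀ i : cell, IsClosed (char i ⁻¹' s)) → IsClosed s

/-- A finite CW structure on a space `X` is a CW structure with finitely many cells. -/
structure FiniteCWStructure (X : Type) [TopologicalSpace X] extends CWStructure X where
  finite_cell : Finite cell

section AuxLifting
open Set

lemma auxConst {Z : Type*} [TopologicalSpace Z] [PreconnectedSpace Z] {g : Z → ℝ}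
    (hg : Continuous g) (h : ∀ z z', ∃ m : ℤ, g z - g z' = m * (2 * Real.pi)) (z z' : Z) :
    g z = g z' := by
  have hpi := Real.pi_pos
  have hclop : IsClopen {w : Z | g w = g z'} := by
    constructor
    · exact isClosed_eq hg continuous_const
    · rw [isOpen_iff_mem_nhds]
      intro w hw
      have : g ⁻¹' (Metric.ball (g w) (2 * Real.pi)) ∈ nhds w :=
        hg.continuousAt.preimage_mem_nhds (Metric.ball_mem_nhds _ (by linarith))
      filter_upwards [this] with w' hw'
      obtain ⟨m, hm⟩ := h w' w
      have hdist : |g w' - g w| < 2 * Real.pi := by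
        simpa [Real.dist_eq] using hw'
      have hm0 : m = 0 := by
        by_contra hm0
        have : (1 : ℝ) ≤ |(m : ℝ)| := by exact_mod_cast Int.one_le_abs hm0
        rw [hm, abs_mul, abs_of_pos (by linarith : (0:ℝ) < 2 * Real.pi)] at hdist
        nlinarith
      have : g w' = g w := by rw [hm0] at hm; push_cast at hm; linarith
      simpa [Set.mem_setOf_eq, this] using hw
  have := hclop.eq_univ ⟨z', rfl⟩
  have hz : z ∈ (univ : Set Z) := mem_univ z
  rw [← this] at hz
  exact hz

def LocTriv {Y X : Type*} [TopologicalSpace Y] [TopologicalSpace X] (f : Y → X) : Prop :=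
  ∀ x₀ : X, ∃ U : Set X, IsOpen U ∧ x₀ ∈ U ∧ ∃ S : Y → X → Y, ∀ y : Y, f y ∈ U →
    ContinuousOn (S y) U ∧ (∀ x ∈ U, f (S y x) = x) ∧ S y (f y) = y ∧
    ∃ W : Set Y, IsOpen W ∧ y ∈ W ∧ ∀ y' ∈ W, f y' ∈ U → Set.EqOn (S y') (S y) U

theorem IsCoveringMap.locTriv {Y X : Type*} [TopologicalSpace Y] [TopologicalSpace X]
    {f : Y → X} (hf : IsCoveringMap f) : LocTriv f := by
  intro x₀
  by_cases hne : Nonempty ↑(f ⁻¹' {x₀})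
  swap
  · obtain ⟨_, U, hxU, hU, _, H, _⟩ := hf x₀
    refine ⟨U, hU, hxU, fun y _ => y, fun y hy => ?_⟩
    exact absurd ⟨(H ⟨y, hy⟩).2⟩ hne
  haveI := hne
  haveI := (hf x₀).1
  set T := (hf x₀).toTrivialization with hT
  refine ⟨T.baseSet, T.open_baseSet, (hf x₀).mem_toTrivialization_baseSet,
    fun y x => T.toPartialHomeomorph.symm (x, (T y).2), ?_⟩
  intro y hyU
  have hysrc : y ∈ T.source := T.mem_source.mpr hyU
  refine ⟨?_, ?_, ?_, ?_⟩
  · apply T.toPartialHomeomorph.continuousOn_symm.comp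
      (Continuous.continuousOn (by fun_prop))
    intro x hx
    exact T.mem_target.mpr hx
  · intro x hx
    exact T.proj_symm_apply (T.mem_target.mpr hx)
  · exact T.symm_apply_mk_proj hysrc
  · refine ⟨T.source ∩ (Prod.snd ∘ T) ⁻¹' {(T y).2}, ?_, ⟨hysrc, rfl⟩, ?_⟩
    · exact T.continuousOn_toFun.isOpen_inter_preimage T.open_source
        (continuous_snd.isOpen_preimage _ <| isOpen_discrete _)
    · intro y' hy' _ x _
      have h2 : (T y').2 = (T y).2 := hy'.2
      show T.toPartialHomeomorph.symm (x, (T y').2) = T.toPartialHomeomorph.symm (x, (T y).2)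
      rw [h2]

theorem IsCoveringMap.uniqIcc {Y X : Type*} [TopologicalSpace Y] [TopologicalSpace X]
    {f : Y → X} (hf : IsCoveringMap f) :
    ∀ g₁ g₂ : ℝ → Y, ContinuousOn g₁ (Icc 0 1) → ContinuousOn g₂ (Icc 0 1) →
      (∀ t ∈ Icc (0:ℝ) 1, f (g₁ t) = f (g₂ t)) → g₁ 0 = g₂ 0 →
      ∀ t ∈ Icc (0:ℝ) 1, g₁ t = g₂ t := by
  intro g₁ g₂ h₁ h₂ he h0
  exact hf.eqOn_of_comp_eqOn isPreconnected_Icc h₁ h₂ (fun t ht => he t ht)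
    (⟨le_refl _, zero_le_one⟩ : (0:ℝ) ∈ Icc (0:ℝ) 1) h0

/-- `Circle.exp` admits discrete local sections. -/
theorem locTriv_circleExp : LocTriv (fun t : ℝ => Circle.exp t) := by
  have hπ := Real.pi_pos
  have hπ3 : (3:ℝ) < Real.pi := Real.pi_gt_three
  intro z₀
  refine ⟨{z : Circle | 1/2 < ((z * z₀⁻¹ : Circle) : ℂ).re}, ?_, ?_,
    fun t z => t + Complex.arg ((z * (Circle.exp t)⁻¹ : Circle) : ℂ), ?_⟩
  · have : Continuous fun z : Circle => ((z * z₀⁻¹ : Circle) : ℂ).re := by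
      apply Complex.continuous_re.comp
      exact continuous_subtype_val.comp (continuous_id.mul continuous_const)
    exact isOpen_Ioi.preimage this
  · show (1:ℝ)/2 < ((z₀ * z₀⁻¹ : Circle) : ℂ).re
    rw [mul_inv_cancel]
    norm_num
  · have harg : ∀ z : Circle, 1/2 < ((z * z₀⁻¹ : Circle) : ℂ).re →
        |Complex.arg ((z * z₀⁻¹ : Circle) : ℂ)| < Real.pi / 3 := by
      intro z hz
      set w : ℂ := ((z * z₀⁻¹ : Circle) : ℂ) with hw
      have hw0 : w ≠ 0 := Circle.coe_ne_zero _
      have habs : ‖w‖ = 1 := Circle.norm_coe _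
      have hcos : Real.cos (Complex.arg w) = w.re := by
        rw [Complex.cos_arg hw0, habs, div_one]
      by_contra hcon
      push_neg at hcon
      have h1 : Real.cos |Complex.arg w| ≤ Real.cos (Real.pi / 3) := by
        apply Real.cos_le_cos_of_nonneg_of_le_pi (by positivity) ?_ hcon
        exact Complex.abs_arg_le_pi w
      rw [Real.cos_abs, Real.cos_pi_div_three, hcos] at h1
      linarith
    intro t ht
    simp only [Set.mem_setOf_eq] at ht
    have hβ : |Complex.arg ((Circle.exp t * z₀⁻¹ : Circle) : ℂ)| < Real.pi / 3 := harg _ ht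
    set β := Complex.arg ((Circle.exp t * z₀⁻¹ : Circle) : ℂ) with hβdef
    have hkeyalg : ∀ t' : ℝ, 1/2 < ((Circle.exp t' * z₀⁻¹ : Circle) : ℂ).re →
        ∀ z : Circle, 1/2 < ((z * z₀⁻¹ : Circle) : ℂ).re →
        Complex.arg ((z * (Circle.exp t')⁻¹ : Circle) : ℂ)
          = Complex.arg ((z * z₀⁻¹ : Circle) : ℂ)
            - Complex.arg ((Circle.exp t' * z₀⁻¹ : Circle) : ℂ) := by
      intro t' ht' z hz
      have hα : |Complex.arg ((z * z₀⁻¹ : Circle) : ℂ)| < Real.pi / 3 := harg z hz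
      have hβ' : |Complex.arg ((Circle.exp t' * z₀⁻¹ : Circle) : ℂ)| < Real.pi / 3 := harg _ ht'
      set α := Complex.arg ((z * z₀⁻¹ : Circle) : ℂ)
      set β' := Complex.arg ((Circle.exp t' * z₀⁻¹ : Circle) : ℂ)
      have h1 : z * z₀⁻¹ = Circle.exp α := (Circle.exp_arg _).symm
      have h2 : Circle.exp t' * z₀⁻¹ = Circle.exp β' := (Circle.exp_arg _).symm
      have h3 : z * (Circle.exp t')⁻¹ = Circle.exp (α - β') := by
        rw [Circle.exp_sub, ← h1, ← h2]
        rw [mul_div_mul_right_eq_div, div_eq_mul_inv]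
      rw [h3]
      rw [abs_lt] at hα hβ'
      exact Circle.arg_exp (by linarith) (by linarith)
    refine ⟨?_, ?_, ?_, ?_⟩
    · -- continuity of the section
      intro z hz
      simp only [Set.mem_setOf_eq] at hz
      apply ContinuousWithinAt.add continuousWithinAt_const
      have hα : |Complex.arg ((z * z₀⁻¹ : Circle) : ℂ)| < Real.pi / 3 := harg z hz
      have hne : ((z * (Circle.exp t)⁻¹ : Circle) : ℂ) ∈ Complex.slitPlane := by
        rw [Complex.mem_slitPlane_iff_arg]
        refine ⟨?_, Circle.coe_ne_zero _⟩
        rw [hkeyalg t ht z hz]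
        rw [abs_lt] at hα hβ
        intro hcon
        have : Real.pi < Real.pi := by
          calc Real.pi = _ - _ := hcon.symm
          _ < Real.pi / 3 + Real.pi / 3 := by linarith [hα.2, hβ.1]
          _ < Real.pi := by linarith
        exact lt_irrefl _ this
      have hc1 : ContinuousAt (fun z : Circle => ((z * (Circle.exp t)⁻¹ : Circle) : ℂ)) z := by
        fun_prop
      have hc2 : ContinuousAt (fun z : Circle =>
          Complex.arg ((z * (Circle.exp t)⁻¹ : Circle) : ℂ)) z :=
        ContinuousAt.comp (g := Complex.arg)
          (f := fun z : Circle => ((z * (Circle.exp t)⁻¹ : Circle) : ℂ))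
          (Complex.continuousAt_arg hne) hc1
      exact hc2.continuousWithinAt
    · intro z _
      show Circle.exp (t + Complex.arg ((z * (Circle.exp t)⁻¹ : Circle) : ℂ)) = z
      rw [Circle.exp_add, Circle.exp_arg]
      rw [mul_comm (Circle.exp t), mul_assoc, inv_mul_cancel, mul_one]
    · show t + Complex.arg ((Circle.exp t * (Circle.exp t)⁻¹ : Circle) : ℂ) = t
      rw [mul_inv_cancel]
      rw [Circle.coe_one, Complex.arg_one, add_zero]
    · -- sections through nearby points agree
      refine ⟨Ioo (t - 1/2) (t + 1/2), isOpen_Ioo, by constructor <;> linarith, ?_⟩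
      intro t' ht'W ht'U z hzU
      simp only [Set.mem_setOf_eq] at ht'U hzU
      have hβ' : |Complex.arg ((Circle.exp t' * z₀⁻¹ : Circle) : ℂ)| < Real.pi / 3 := harg _ ht'U
      set β' := Complex.arg ((Circle.exp t' * z₀⁻¹ : Circle) : ℂ) with hβ'def
      have e1 := hkeyalg t ht z hzU
      have e2 := hkeyalg t' ht'U z hzU
      have e3 : Circle.exp (t' - t) = Circle.exp (β' - β) := by
        have h2 : Circle.exp t * z₀⁻¹ = Circle.exp β := (Circle.exp_arg _).symm
        have h2' : Circle.exp t' * z₀⁻¹ = Circle.exp β' := (Circle.exp_arg _).symm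
        rw [Circle.exp_sub, Circle.exp_sub, ← h2, ← h2']
        rw [mul_div_mul_right_eq_div]
      obtain ⟨m, hm⟩ := Circle.exp_eq_exp.mp e3
      obtain ⟨ht'1, ht'2⟩ := ht'W
      rw [abs_lt] at hβ hβ'
      have hm0 : m = 0 := by
        by_contra hm0
        have h1 : (1 : ℝ) ≤ |(m : ℝ)| := by exact_mod_cast Int.one_le_abs hm0
        have h2 : |(m : ℝ) * (2 * Real.pi)| < 2 * Real.pi := by
          have : (m : ℝ) * (2 * Real.pi) = (t' - t) - (β' - β) := by linarith
          rw [this, abs_lt]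
          constructor <;> linarith [hβ.1, hβ.2, hβ'.1, hβ'.2]
        rw [abs_mul, abs_of_pos (by linarith : (0:ℝ) < 2 * Real.pi)] at h2
        nlinarith
      rw [hm0] at hm
      push_cast at hm
      show t' + Complex.arg ((z * (Circle.exp t')⁻¹ : Circle) : ℂ)
          = t + Complex.arg ((z * (Circle.exp t)⁻¹ : Circle) : ℂ)
      rw [e1, e2]
      linarith

/-- Uniqueness of lifts through `Circle.exp` on `[0,1]`. -/
theorem uniqIcc_circleExp :
    ∀ g₁ g₂ : ℝ → ℝ, ContinuousOn g₁ (Icc 0 1) → ContinuousOn g₂ (Icc 0 1) →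
      (∀ t ∈ Icc (0:ℝ) 1, Circle.exp (g₁ t) = Circle.exp (g₂ t)) → g₁ 0 = g₂ 0 →
      ∀ t ∈ Icc (0:ℝ) 1, g₁ t = g₂ t := by
  intro g₁ g₂ h₁ h₂ he h0 t ht
  haveI : PreconnectedSpace (Icc (0:ℝ) 1) := Subtype.preconnectedSpace isPreconnected_Icc
  have hg : Continuous fun z : Icc (0:ℝ) 1 => g₁ z - g₂ z :=
    (h₁.restrict).sub (h₂.restrict)
  have hper : ∀ z z' : Icc (0:ℝ) 1,
      ∃ m : ℤ, (g₁ z - g₂ z) - (g₁ z' - g₂ z') = m * (2 * Real.pi) := by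
    intro z z'
    obtain ⟨m, hm⟩ := Circle.exp_eq_exp.mp (he z z.2)
    obtain ⟨m', hm'⟩ := Circle.exp_eq_exp.mp (he z' z'.2)
    exact ⟨m - m', by push_cast; linarith⟩
  have := auxConst hg hper ⟨t, ht⟩ ⟨0, ⟨le_refl _, zero_le_one⟩⟩
  simp only [] at this
  rw [h0] at this
  linarith

/-- Lifting of homotopies through a map with discrete local sections, producing the
time-one lift. -/
theorem hlp {Y X A : Type*} [TopologicalSpace Y] [TopologicalSpace X] [TopologicalSpace A]
    {f : Y → X} (hloc : LocTriv f)
    (huniq : ∀ g₁ g₂ : ℝ → Y, ContinuousOn g₁ (Icc 0 1) → ContinuousOn g₂ (Icc 0 1) →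
      (∀ t ∈ Icc (0:ℝ) 1, f (g₁ t) = f (g₂ t)) → g₁ 0 = g₂ 0 →
      ∀ t ∈ Icc (0:ℝ) 1, g₁ t = g₂ t)
    {K : A × ℝ → X} (hK : Continuous K) {k₀ : A → Y} (hk₀ : Continuous k₀)
    (h0 : ∀ a, f (k₀ a) = K (a, 0)) :
    ∃ L : A → Y, Continuous L ∧ ∀ a, f (L a) = K (a, 1) := by
  -- Step 1: local (in `A`) lifts on all of `[0,1]`
  have step1 : ∀ a₀ : A, ∃ N : Set A, IsOpen N ∧ a₀ ∈ N ∧ ∃ L : A × ℝ → Y,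
      ContinuousOn L (N ×ˢ Icc 0 1) ∧ (∀ a ∈ N, L (a, 0) = k₀ a) ∧
      ∀ a ∈ N, ∀ t ∈ Icc (0:ℝ) 1, f (L (a, t)) = K (a, t) := by
    intro a₀
    set SS : Set ℝ := {s | s ∈ Icc (0:ℝ) 1 ∧ ∃ N : Set A, IsOpen N ∧ a₀ ∈ N ∧
      ∃ L : A × ℝ → Y, ContinuousOn L (N ×ˢ Icc 0 s) ∧ (∀ a ∈ N, L (a, 0) = k₀ a) ∧
      ∀ a ∈ N, ∀ t ∈ Icc (0:ℝ) s, f (L (a, t)) = K (a, t)} with hSS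
    have h0S : (0:ℝ) ∈ SS := by
      refine ⟨⟨le_refl _, zero_le_one⟩, univ, isOpen_univ, mem_univ _, fun q => k₀ q.1,
        (hk₀.comp continuous_fst).continuousOn, fun a _ => rfl, ?_⟩
      intro a _ t ht
      have : t = 0 := le_antisymm ht.2 ht.1
      rw [this]; exact h0 a
    have hbdd : BddAbove SS := ⟨1, fun s hs => hs.1.2⟩
    set σ := sSup SS with hσdef
    have hσ0 : 0 ≤ σ := le_csSup hbdd h0S
    have hσ1 : σ ≤ 1 := csSup_le ⟨0, h0S⟩ fun s hs => hs.1.2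
    -- the extension step
    have keyext : ∃ ε > (0:ℝ), ∀ s ∈ SS, σ - ε < s → s ≤ σ → min 1 (σ + ε / 2) ∈ SS := by
      obtain ⟨U, hUopen, hxU, S, hS⟩ := hloc (K (a₀, σ))
      have hKU : K ⁻¹' U ∈ nhds (a₀, σ) :=
        hK.continuousAt.preimage_mem_nhds (hUopen.mem_nhds hxU)
      rw [mem_nhds_prod_iff] at hKU
      obtain ⟨N', hN', T', hT', hsub⟩ := hKU
      obtain ⟨Nop, hNopsub, hNopen, haNop⟩ := mem_nhds_iff.mp hN'
      obtain ⟨ε, hεpos, hball⟩ := Metric.mem_nhds_iff.mp hT'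
      rw [Real.ball_eq_Ioo] at hball
      refine ⟨ε, hεpos, ?_⟩
      intro s hsS hs1 hs2
      obtain ⟨⟨hs0, hsle1⟩, N₁, hN₁open, haN₁, L₁, hL₁cont, hL₁0, hL₁f⟩ := hsS
      have hmemIoo : ∀ t : ℝ, σ - ε < t → t < σ + ε → t ∈ T' :=
        fun t h1 h2 => hball ⟨h1, h2⟩
      have hKinU : ∀ a ∈ Nop, ∀ t : ℝ, σ - ε < t → t < σ + ε → K (a, t) ∈ U := by
        intro a ha t h1 h2
        exact hsub ⟨hNopsub ha, hmemIoo t h1 h2⟩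
      -- the connecting point
      have haNop' : a₀ ∈ Nop := haNop
      have hsIoo : σ - ε < s ∧ s < σ + ε := ⟨hs1, by linarith⟩
      set y₀ := L₁ (a₀, s) with hy₀def
      have hfy₀ : f y₀ = K (a₀, s) := hL₁f a₀ haN₁ s ⟨hs0, le_refl _⟩
      have hy₀U : f y₀ ∈ U := by rw [hfy₀]; exact hKinU a₀ haNop' s hsIoo.1 hsIoo.2
      obtain ⟨hScont, hSsec, hSat, W, hWopen, hyW, hWeq⟩ := hS y₀ hy₀U
      -- slice map
      have hmcont : ContinuousOn (fun a => L₁ (a, s)) N₁ := by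
        apply hL₁cont.comp (Continuous.continuousOn (by fun_prop))
        intro a ha; exact ⟨ha, ⟨hs0, le_refl _⟩⟩
      set N₂ := (N₁ ∩ (fun a => L₁ (a, s)) ⁻¹' W) ∩ Nop with hN₂def
      have hN₂open : IsOpen N₂ :=
        (hmcont.isOpen_inter_preimage hN₁open hWopen).inter hNopen
      have haN₂ : a₀ ∈ N₂ := ⟨⟨haN₁, hyW⟩, haNop'⟩
      set s' := min 1 (σ + ε / 2) with hs'def
      have hss' : s ≤ s' := le_min hsle1 (by linarith)
      have hs'0 : 0 ≤ s' := le_trans hs0 hss'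
      have hs'1 : s' ≤ 1 := min_le_left _ _
      have hs'lt : s' < σ + ε := lt_of_le_of_lt (min_le_right _ _) (by linarith)
      -- facts for a ∈ N₂
      have hN₂sub1 : N₂ ⊆ N₁ := fun a ha => ha.1.1
      have hN₂subop : N₂ ⊆ Nop := fun a ha => ha.2
      have hKU2 : ∀ a ∈ N₂, ∀ t : ℝ, s ≤ t → t ≤ s' → K (a, t) ∈ U := by
        intro a ha t h1 h2
        exact hKinU a (hN₂subop ha) t (lt_of_lt_of_le hs1 h1) (lt_of_le_of_lt h2 hs'lt)
      have hmatch : ∀ a ∈ N₂, S y₀ (K (a, s)) = L₁ (a, s) := by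
        intro a ha
        have hfm : f (L₁ (a, s)) = K (a, s) := hL₁f a (hN₂sub1 ha) s ⟨hs0, le_refl _⟩
        have hmU : f (L₁ (a, s)) ∈ U := by rw [hfm]; exact hKU2 a ha s (le_refl _) hss'
        have heq := hWeq (L₁ (a, s)) ha.1.2 hmU
        have hKsU : K (a, s) ∈ U := hKU2 a ha s (le_refl _) hss'
        have h1 : S (L₁ (a, s)) (K (a, s)) = S y₀ (K (a, s)) := heq hKsU
        have h2 : S (L₁ (a, s)) (K (a, s)) = L₁ (a, s) := by
          obtain ⟨_, _, hat, _⟩ := hS (L₁ (a, s)) hmU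
          rw [← hfm]; exact hat
        rw [← h1, h2]
      set L₂ : A × ℝ → Y := fun q => if q.2 ≤ s then L₁ q else S y₀ (K q) with hL₂def
      refine ⟨⟨hs'0, hs'1⟩, N₂, hN₂open, haN₂, L₂, ?_, ?_, ?_⟩
      · -- continuity
        have hcov : ContinuousOn L₂ ((N₂ ×ˢ Icc 0 s) ∪ (N₂ ×ˢ Icc s s')) := by
          intro q hq
          have hq2 : q.1 ∈ N₂ := by rcases hq with h | h; exacts [h.1, h.1]
          apply ContinuousWithinAt.union
          · -- piece 1
            by_cases h : q.2 ≤ s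
            · have hqP : q ∈ N₂ ×ˢ Icc (0:ℝ) s := by
                refine ⟨hq2, ?_, h⟩
                rcases hq with hh | hh
                · exact hh.2.1
                · exact le_trans hs0 hh.2.1
              have hcw : ContinuousWithinAt L₁ (N₂ ×ˢ Icc 0 s) q := by
                apply (hL₁cont.mono ?_) q hqP
                exact Set.prod_mono hN₂sub1 (le_refl _)
              apply hcw.congr ?_ (by simp [hL₂def, h])
              intro y hy; simp [hL₂def, hy.2.2]
            · apply continuousWithinAt_of_notMem_closure
              intro hcl
              have : q ∈ (univ : Set A) ×ˢ Icc (0:ℝ) s := by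
                apply closure_minimal ?_ (isClosed_univ.prod isClosed_Icc) hcl
                exact Set.prod_mono (subset_univ _) (le_refl _)
              exact h this.2.2
          · -- piece 2
            by_cases h : s ≤ q.2
            · have hqP : q ∈ N₂ ×ˢ Icc s s' := by
                refine ⟨hq2, h, ?_⟩
                rcases hq with hh | hh
                · exact le_trans hh.2.2 hss'
                · exact hh.2.2
              have hKcw : ContinuousWithinAt K (N₂ ×ˢ Icc s s') q := hK.continuousWithinAt
              have hmap : MapsTo K (N₂ ×ˢ Icc s s') U :=
                fun y hy => hKU2 y.1 hy.1 y.2 hy.2.1 hy.2.2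
              have hcw : ContinuousWithinAt (fun q => S y₀ (K q)) (N₂ ×ˢ Icc s s') q :=
                (hScont (K q) (hmap hqP)).comp hKcw hmap
              apply hcw.congr ?_ ?_
              · intro y hy
                by_cases hy2 : y.2 ≤ s
                · have : y.2 = s := le_antisymm hy2 hy.2.1
                  have hy' : y = (y.1, s) := by rw [← this]
                  rw [hy']
                  simp only [hL₂def, if_pos (le_refl s)]
                  exact (hmatch y.1 hy.1).symm
                · simp [hL₂def, hy2]
              · by_cases hq2' : q.2 ≤ s
                · have : q.2 = s := le_antisymm hq2' h
                  have hq' : q = (q.1, s) := by rw [← this]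
                  rw [hq']
                  simp only [hL₂def, if_pos (le_refl s)]
                  exact (hmatch q.1 hq2).symm
                · simp [hL₂def, hq2']
            · apply continuousWithinAt_of_notMem_closure
              intro hcl
              have : q ∈ (univ : Set A) ×ˢ Icc s s' := by
                apply closure_minimal ?_ (isClosed_univ.prod isClosed_Icc) hcl
                exact Set.prod_mono (subset_univ _) (le_refl _)
              exact h this.2.1
        apply hcov.mono
        intro q hq
        rcases le_total q.2 s with h | h
        · exact Or.inl ⟨hq.1, hq.2.1, h⟩
        · exact Or.inr ⟨hq.1, h, hq.2.2⟩
      · intro a ha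
        simp only [hL₂def, if_pos hs0]
        exact hL₁0 a (hN₂sub1 ha)
      · intro a ha t ht
        by_cases h : t ≤ s
        · simp only [hL₂def, if_pos h]
          exact hL₁f a (hN₂sub1 ha) t ⟨ht.1, h⟩
        · simp only [hL₂def, if_neg h]
          exact hSsec (K (a, t)) (hKU2 a ha t (le_of_not_ge h) ht.2)
    obtain ⟨ε, hεpos, hkey⟩ := keyext
    obtain ⟨s, hsS, hs⟩ := exists_lt_of_lt_csSup ⟨0, h0S⟩ (by linarith : σ - ε < σ)
    have hsσ : s ≤ σ := le_csSup hbdd hsS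
    have h1S : min 1 (σ + ε / 2) ∈ SS := hkey s hsS hs hsσ
    have hσeq : σ = 1 := by
      have hle := le_csSup hbdd h1S
      rcases le_total 1 (σ + ε / 2) with h | h
      · rw [min_eq_left h] at hle; exact le_antisymm hσ1 hle
      · rw [min_eq_right h] at hle; linarith
    have : (1:ℝ) ∈ SS := by
      rw [hσeq] at h1S
      rwa [min_eq_left (by linarith)] at h1S
    obtain ⟨_, N, hNopen, haN, L, hLcont, hL0, hLf⟩ := this
    exact ⟨N, hNopen, haN, L, hLcont, hL0, hLf⟩
  -- Step 2: global gluing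
  choose N hNopen haN L hLcont hL0 hLf using step1
  refine ⟨fun a => L a (a, 1), ?_, fun a => hLf a a (haN a) 1 ⟨zero_le_one, le_refl _⟩⟩
  rw [continuous_iff_continuousAt]
  intro a₀
  have hslice : ∀ b : A, ∀ a ∈ N b, ContinuousOn (fun t : ℝ => L b (a, t)) (Icc 0 1) := by
    intro b a ha
    apply (hLcont b).comp (Continuous.continuousOn (by fun_prop))
    intro t ht; exact ⟨ha, ht⟩
  have heq : ∀ a ∈ N a₀, L a (a, 1) = L a₀ (a, 1) := by
    intro a ha
    have := huniq (fun t => L a (a, t)) (fun t => L a₀ (a, t))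
      (hslice a a (haN a)) (hslice a₀ a ha)
      (fun t ht => by rw [hLf a a (haN a) t ht, hLf a₀ a ha t ht])
      (by rw [hL0 a a (haN a), hL0 a₀ a ha])
    exact this 1 ⟨zero_le_one, le_refl _⟩
  have hc : ContinuousOn (fun a => L a₀ (a, 1)) (N a₀) := by
    apply (hLcont a₀).comp (Continuous.continuousOn (by fun_prop))
    intro a ha; exact ⟨ha, zero_le_one, le_refl _⟩
  have hca : ContinuousAt (fun a => L a₀ (a, 1)) a₀ :=
    hc.continuousAt ((hNopen a₀).mem_nhds (haN a₀))
  apply hca.congr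
  filter_upwards [(hNopen a₀).mem_nhds (haN a₀)] with a ha
  exact (heq a ha).symm

end AuxLifting

/-- The flat principal `S¹`-bundle over the Eilenberg–MacLane space
`K(ℚ/ℤ,1)` with holonomy the inclusion `ℚ/ℤ ↪ S¹` is not virtually trivial.  Here
`K(ℚ/ℤ,1)` is presented as a CW-complex `X` with a contractible universal cover `X̃` whose
deck transformation group `Γ` is isomorphic to `ℚ/ℤ`, and the holonomy is any injective
homomorphism `ρ : Γ → S¹` (i.e. the inclusion of `ℚ/ℤ` as the torsion subgroup of `S¹`,
up to an automorphism of `ℚ/ℤ`). -/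
theorem flat_circle_bundle_over_K_QZ_1_not_virtually_trivial
    (X : Type) [TopologicalSpace X] (hX : Nonempty (CWStructure X))
    (Xt : Type) [TopologicalSpace Xt] (u : Xt → X)
    (hu : IsCoveringMap u) [ConnectedSpace Xt] (hcontr : ContractibleSpace Xt)
    (Γ : Type) [Group Γ] [MulAction Γ Xt]
    (hcont : ∀ γ : Γ, Continuous fun x : Xt => γ • x)
    (hfree : ∀ (γ : Γ) (x : Xt), γ • x = x → γ = 1)
    (hover : ∀ (γ : Γ) (x : Xt), u (γ • x) = u x)
    (htrans : ∀ x y : Xt, u x = u y → ∃ γ : Γ, γ • x = y)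
    (e : Γ ≃* Multiplicative (AddCircle (1 : ℚ)))
    (ρ : Γ →* Circle) (hρ : Function.Injective ⇑ρ)
    (E : Type) [TopologicalSpace E] [MulAction Circle E] (p : E → X)
    (hp : IsPrincipalBundle Circle p)
    (Φ : E ≃ₜ FlatTotalSpace Xt ρ)
    (hΦ_proj : ∀ e : E, FlatTotalSpace.proj ρ u hover (Φ e) = p e)
    (hΦ_equiv : ∀ (g : Circle) (e : E), Φ (g • e) = FlatTotalSpace.smul ρ g (Φ e)) :
    ¬ IsVirtuallyTrivial Circle p := by
  rintro ⟨Y, tY, f, hYconn, hfc, φ, hφ1, hφ2⟩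
  classical
  letI := tY
  haveI := hYconn
  -- contraction of Xt
  haveI := hcontr
  obtain ⟨x₀, hnull⟩ := id_nullhomotopic Xt
  obtain ⟨Q⟩ := hnull
  set QR : Xt × ℝ → Xt := fun q => Q (Set.projIcc 0 1 zero_le_one (1 - q.2), q.1) with hQRdef
  have hQRcont : Continuous QR :=
    Q.continuous.comp ((continuous_projIcc.comp
      (continuous_const.sub continuous_snd)).prodMk continuous_fst)
  have hproj1 : Set.projIcc (0:ℝ) 1 zero_le_one ((1:ℝ) - 0) = 1 := by
    norm_num
  have hproj0 : Set.projIcc (0:ℝ) 1 zero_le_one ((1:ℝ) - 1) = 0 := by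
    norm_num
  have hQR0 : ∀ a : Xt, QR (a, 0) = x₀ := by
    intro a
    show Q (Set.projIcc 0 1 zero_le_one ((1:ℝ) - 0), a) = x₀
    rw [hproj1, Q.apply_one]
    rfl
  have hQR1 : ∀ a : Xt, QR (a, 1) = a := by
    intro a
    show Q (Set.projIcc 0 1 zero_le_one ((1:ℝ) - 1), a) = a
    rw [hproj0, Q.apply_zero]
    rfl
  -- u is surjective, X is connected
  have husurj : Function.Surjective u := by
    intro x
    obtain ⟨e₀, he₀⟩ := hp.surjective_proj x
    obtain ⟨⟨x1, g1⟩, hq⟩ := Quot.exists_rep (Φ e₀)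
    refine ⟨x1, ?_⟩
    have h1 : FlatTotalSpace.proj ρ u hover (Quot.mk _ (x1, g1)) = u x1 := rfl
    rw [← he₀, ← hΦ_proj e₀, ← hq, h1]
  haveI : ConnectedSpace X := husurj.connectedSpace hu.continuous
  -- f is surjective
  have hfsurj : Function.Surjective f := by
    have hropen : IsOpen (Set.range f) := hfc.1.isOpenMap.isOpen_range
    have hrcl : IsClosed (Set.range f) := by
      rw [← isOpen_compl_iff, isOpen_iff_mem_nhds]
      intro x hx
      obtain ⟨_, U, hxU, hU, _, H, _⟩ := hfc.1 x
      apply Filter.mem_of_superset (hU.mem_nhds hxU)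
      intro x' hx'
      simp only [Set.mem_compl_iff, Set.mem_range]
      rintro ⟨y, hy⟩
      apply hx
      have hmem := (H ⟨y, show f y ∈ U by rw [hy]; exact hx'⟩).2.2
      simp only [Set.mem_preimage, Set.mem_singleton_iff] at hmem
      exact ⟨_, hmem⟩
    have hne : (Set.range f).Nonempty := Set.range_nonempty f
    have : Set.range f = Set.univ := IsClopen.eq_univ ⟨hrcl, hropen⟩ hne
    exact Set.range_eq_univ.mp this
  obtain ⟨y₀, hy₀⟩ := hfsurj (u x₀)
  -- lift u through f using the homotopy lifting property
  have hK1cont : Continuous (fun q : Xt × ℝ => u (QR q)) := hu.continuous.comp hQRcont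
  obtain ⟨v, hvcont, hvf⟩ := hlp hfc.1.locTriv hfc.1.uniqIcc hK1cont
    (continuous_const : Continuous fun _ : Xt => y₀)
    (fun a => by rw [hQR0 a]; exact hy₀)
  have hfv : ∀ x : Xt, f (v x) = u x := fun x => by rw [hvf x, hQR1 x]
  -- commutativity of Γ
  have hcomm : ∀ a b : Γ, a * b = b * a := fun a b =>
    e.injective (by rw [map_mul, map_mul, mul_comm])
  -- the subgroup of deck transformations preserving v
  set H : Subgroup Γ :=
    { carrier := {γ : Γ | ∀ x : Xt, v (γ • x) = v x}
      one_mem' := fun x => by rw [one_smul]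
      mul_mem' := by
        intro a b ha hb x
        rw [mul_smul, ha (b • x), hb x]
      inv_mem' := by
        intro a ha x
        have := ha (a⁻¹ • x)
        rw [smul_inv_smul] at this
        exact this.symm } with hHdef
  have hmemH : ∀ γ : Γ, γ ∈ H ↔ ∀ x : Xt, v (γ • x) = v x := fun γ => Iff.rfl
  -- two deck translates of v agreeing at a point agree everywhere
  have klemma : ∀ α β : Γ, v (α • x₀) = v (β • x₀) → ∀ x, v (α • x) = v (β • x) := by
    intro α β hab
    have h1 : Continuous fun x : Xt => v (α • x) := hvcont.comp (hcont α)
    have h2 : Continuous fun x : Xt => v (β • x) := hvcont.comp (hcont β)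
    have he : f ∘ (fun x : Xt => v (α • x)) = f ∘ (fun x : Xt => v (β • x)) := by
      funext x
      show f (v (α • x)) = f (v (β • x))
      rw [hfv, hfv, hover, hover]
    have := hfc.1.eq_of_comp_eq h1 h2 he x₀ hab
    exact fun x => congrFun this x
  -- the quotient Γ ⧸ H injects into the fiber of f over u x₀, hence is finite
  set o : Γ → ↥(f ⁻¹' {u x₀}) := fun γ =>
    ⟨v (γ • x₀), by
      simp only [Set.mem_preimage, Set.mem_singleton_iff]
      rw [hfv, hover]⟩ with hodef
  have hwd : ∀ a b : Γ, (QuotientGroup.leftRel H) a b → o a = o b := by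
    intro a b hab
    have hH : a⁻¹ * b ∈ H := QuotientGroup.leftRel_apply.mp hab
    have hH' : ∀ x : Xt, v ((a⁻¹ * b) • x) = v x := hH
    apply Subtype.ext
    show v (a • x₀) = v (b • x₀)
    have h1 := hH' (a • x₀)
    rw [← mul_smul] at h1
    have h2 : a⁻¹ * b * a = b := by
      rw [hcomm a⁻¹ b, mul_assoc, inv_mul_cancel, mul_one]
    rw [h2] at h1
    exact h1.symm
  set j : Γ ⧸ H → ↥(f ⁻¹' {u x₀}) := Quotient.lift o hwd with hjdef
  have hinj : Function.Injective j := by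
    intro c₁ c₂
    refine Quotient.inductionOn₂ c₁ c₂ ?_
    intro a b hab
    apply Quotient.sound
    apply QuotientGroup.leftRel_apply.mpr
    have hvab : v (a • x₀) = v (b • x₀) := by
      have := Subtype.ext_iff.mp hab
      exact this
    have hall := klemma a b hvab
    intro x
    show v ((a⁻¹ * b) • x) = v x
    rw [hcomm a⁻¹ b, mul_smul, ← hall (a⁻¹ • x), smul_inv_smul]
  haveI : Finite ↥(f ⁻¹' {u x₀}) := hfc.2 (u x₀)
  haveI : Finite (Γ ⧸ H) := Finite.of_injective j hinj
  haveI : H.Normal := ⟨fun n hn g => by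
    have hgn : g * n * g⁻¹ = n := by
      rw [hcomm g n, mul_assoc, mul_inv_cancel, mul_one]
    rw [hgn]; exact hn⟩
  haveI : H.FiniteIndex := H.finiteIndex_of_finite_quotient
  set m : ℕ := H.index with hmdef
  have hm0 : m ≠ 0 := Subgroup.FiniteIndex.index_ne_zero
  -- the order-two element γ₀ of Γ, lying in H
  set r : ℚ := 1 / (2 * m) with hrdef
  set δ : Γ := e.symm (Multiplicative.ofAdd ((r : ℚ) : AddCircle (1:ℚ))) with hδdef
  set γ₀ : Γ := δ ^ m with hγ₀def
  have hγ₀H : γ₀ ∈ H := H.pow_index_mem δ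
  have he_γ₀ : e γ₀ = Multiplicative.ofAdd (((1/2 : ℚ) : AddCircle (1:ℚ))) := by
    rw [hγ₀def, map_pow, hδdef, MulEquiv.apply_symm_apply, ← ofAdd_nsmul]
    congr 1
    have h1 : m • ((r : ℚ) : AddCircle (1:ℚ)) = ((m • r : ℚ) : AddCircle (1:ℚ)) :=
      (map_nsmul (QuotientAddGroup.mk' (AddSubgroup.zmultiples (1:ℚ))) m r).symm
    rw [h1]
    congr 1
    rw [nsmul_eq_mul, hrdef]
    have : (m : ℚ) ≠ 0 := Nat.cast_ne_zero.mpr hm0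
    field_simp
  have hhalf : ((1/2 : ℚ) : AddCircle (1:ℚ)) + ((1/2 : ℚ) : AddCircle (1:ℚ)) = 0 := by
    have h1 : ((1/2 : ℚ) : AddCircle (1:ℚ)) + ((1/2 : ℚ) : AddCircle (1:ℚ))
        = (((1/2 : ℚ) + (1/2 : ℚ) : ℚ) : AddCircle (1:ℚ)) := rfl
    rw [h1]
    norm_num
  have hγ₀sq : γ₀ * γ₀ = 1 := by
    apply e.injective
    rw [map_mul, he_γ₀, map_one, ← ofAdd_add, hhalf, ofAdd_zero]
  have hγ₀ne : γ₀ ≠ 1 := by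
    intro h
    have h1 := congrArg e h
    rw [he_γ₀, map_one, ← ofAdd_zero] at h1
    have h2 : ((1/2 : ℚ) : AddCircle (1:ℚ)) = 0 := Multiplicative.ofAdd.injective h1
    rw [AddCircle.coe_eq_zero_iff] at h2
    obtain ⟨n, hn⟩ := h2
    rw [zsmul_eq_mul, mul_one] at hn
    have : ((2 * n : ℤ) : ℚ) = 1 := by push_cast; linarith
    have : (2 * n : ℤ) = 1 := by exact_mod_cast this
    omega
  have hvinv : ∀ x : Xt, v (γ₀ • x) = v x := hγ₀H
  -- the flat bundle's canonical maps
  set Fm : Xt × Circle → E := fun q => Φ.symm (Quot.mk _ q) with hFmdef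
  have hFcont : Continuous Fm := Φ.symm.continuous.comp continuous_quot_mk
  have hpF : ∀ (x : Xt) (g : Circle), p (Fm (x, g)) = u x := by
    intro x g
    have h1 : Φ (Fm (x, g)) = Quot.mk _ (x, g) := Φ.apply_symm_apply _
    rw [← hΦ_proj (Fm (x, g)), h1]
    rfl
  have hΦsymm_smul : ∀ (h : Circle) (q : FlatTotalSpace Xt ρ),
      Φ.symm (FlatTotalSpace.smul ρ h q) = h • Φ.symm q := by
    intro h q
    apply Φ.injective
    rw [hΦ_equiv, Φ.apply_symm_apply, Φ.apply_symm_apply]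
  have hFequiv : ∀ (x : Xt) (g h : Circle), Fm (x, h * g) = h • Fm (x, g) := by
    intro x g h
    have h1 : FlatTotalSpace.smul ρ h (Quot.mk _ (x, g)) = Quot.mk _ (x, h * g) := rfl
    show Φ.symm (Quot.mk _ (x, h * g)) = h • Φ.symm (Quot.mk _ (x, g))
    rw [← h1]
    exact hΦsymm_smul h _
  have hFdeck : ∀ (x : Xt) (g : Circle), Fm (γ₀ • x, g) = Fm (x, g * ρ γ₀) := by
    intro x g
    have h1 : (Quot.mk _ (x, g * ρ γ₀) : FlatTotalSpace Xt ρ) = Quot.mk _ (γ₀ • x, g) := by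
      apply Quot.sound
      exact ⟨γ₀, Prod.ext rfl (by rw [mul_inv_cancel_right])⟩
    show Φ.symm (Quot.mk _ (γ₀ • x, g)) = Φ.symm (Quot.mk _ (x, g * ρ γ₀))
    rw [h1]
  -- the pullback comparison and the resulting cocycle
  set ζ : Xt × Circle → {q : Y × E // f q.1 = p q.2} := fun w =>
    ⟨(v w.1, Fm w), by
      show f (v w.1) = p (Fm w)
      rw [hfv w.1, ← hpF w.1 w.2]⟩ with hζdef
  have hζcont : Continuous ζ :=
    Continuous.subtype_mk ((hvcont.comp continuous_fst).prodMk hFcont) _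
  set τ : Xt → Circle := fun x => (φ.symm (ζ (x, 1))).2 with hτdef
  have hτcont : Continuous τ :=
    continuous_snd.comp (φ.symm.continuous.comp
      (hζcont.comp (continuous_id.prodMk continuous_const)))
  have hkey : ∀ (x : Xt) (h : Circle), φ.symm (ζ (x, h)) = (v x, h * τ x) := by
    intro x h
    set w := φ.symm (ζ (x, 1)) with hwdef
    have hw : φ w = ζ (x, 1) := φ.apply_symm_apply _
    have hw1 : w.1 = v x := by
      have h1 := hφ1 w.1 w.2
      rw [Prod.mk.eta, hw] at h1
      exact h1.symm
    have hτx : w.2 = τ x := rfl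
    have hφapp : φ (v x, h * τ x) = ζ (x, h) := by
      apply Subtype.ext
      apply Prod.ext
      · rw [hφ1]
      · have h2 := hφ2 (v x) (τ x) h
        rw [h2]
        have h3 : ((v x, τ x) : Y × Circle) = w := by
          rw [← hw1, ← hτx]
        rw [h3, hw]
        show h • Fm (x, 1) = Fm (x, h)
        rw [← hFequiv x 1 h, mul_one]
    rw [← hφapp, φ.symm_apply_apply]
  have hcocycle : ∀ x : Xt, τ (γ₀ • x) = ρ γ₀ * τ x := by
    intro x
    have h1 : ζ (γ₀ • x, 1) = ζ (x, ρ γ₀) := by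
      apply Subtype.ext
      apply Prod.ext
      · show v (γ₀ • x) = v x
        exact hvinv x
      · show Fm (γ₀ • x, 1) = Fm (x, ρ γ₀)
        rw [hFdeck x 1, one_mul]
    have h2 := hkey (γ₀ • x) 1
    rw [h1, hkey x (ρ γ₀)] at h2
    have h3 := congrArg Prod.snd h2
    simp only [] at h3
    rw [one_mul] at h3
    exact h3.symm
  -- lift τ through Circle.exp
  have hK2cont : Continuous (fun q : Xt × ℝ => τ (QR q)) := hτcont.comp hQRcont
  obtain ⟨T, hTcont, hTexp'⟩ := hlp locTriv_circleExp uniqIcc_circleExp hK2cont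
    (continuous_const : Continuous fun _ : Xt => Complex.arg ((τ x₀ : Circle) : ℂ))
    (fun a => by rw [hQR0 a]; exact Circle.exp_arg _)
  have hTexp : ∀ x : Xt, Circle.exp (T x) = τ x := by
    intro x
    rw [hTexp' x, hQR1 x]
  -- the holonomy cocycle for γ₀ is trivial
  set gf : Xt → ℝ := fun x => T (γ₀ • x) - T x with hgfdef
  have hgcont : Continuous gf := (hTcont.comp (hcont γ₀)).sub hTcont
  have hgexp : ∀ x : Xt, Circle.exp (gf x) = ρ γ₀ := by
    intro x
    rw [hgfdef]
    simp only []
    rw [Circle.exp_sub, hTexp, hTexp, hcocycle x, mul_div_cancel_right]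
  have hper : ∀ x x' : Xt, ∃ n : ℤ, gf x - gf x' = n * (2 * Real.pi) := by
    intro x x'
    have h1 : Circle.exp (gf x) = Circle.exp (gf x') := by rw [hgexp, hgexp]
    obtain ⟨n, hn⟩ := Circle.exp_eq_exp.mp h1
    exact ⟨n, by linarith⟩
  have hconst := auxConst hgcont hper
  have hg0 : gf x₀ = 0 := by
    have h1 : gf (γ₀ • x₀) + gf x₀ = 0 := by
      show (T (γ₀ • (γ₀ • x₀)) - T (γ₀ • x₀)) + (T (γ₀ • x₀) - T x₀) = 0
      rw [smul_smul, hγ₀sq, one_smul]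
      ring
    have h2 : gf (γ₀ • x₀) = gf x₀ := hconst _ _
    linarith
  have hρ1 : ρ γ₀ = 1 := by
    rw [← hgexp x₀, hg0, Circle.exp_zero]
  exact hγ₀ne (hρ (by rw [hρ1, map_one]))
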